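/- Let n ≥ 2 be an integer with n ≠ 3. Then the automorphism group of the generalised quaternion group Q_{2^n} of order 2^n (Mathlib's QuaternionGroup 2^{n-2}) has cardinality 2^{2n-3}. -/

import Mathlib

open QuaternionGroup

variable {m : ℕ}

lemma unit_mul_m (u : (ZMod (2*m))ˣ) : (u : ZMod (2*m)) * (m : ZMod (2*m)) = m := by
  rcases Nat.eq_zero_or_pos m with hm | hm
  · subst hm; simp
  haveI : NeZero (2*m) := ⟨by omega⟩
  have hc : Nat.Coprime ((u : ZMod (2*m)).val) (2*m) := ZMod.val_coe_unit_coprime u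
  have hodd : Odd ((u : ZMod (2*m)).val) :=
    Nat.Coprime.odd_of_right (Nat.Coprime.coprime_dvd_right ⟨m, rfl⟩ hc)
  obtain ⟨t, ht⟩ := hodd
  calc (u : ZMod (2*m)) * (m : ZMod (2*m))
      = (((u : ZMod (2*m)).val : ZMod (2*m))) * m := by rw [ZMod.natCast_zmod_val]
    _ = ((((u : ZMod (2*m)).val) * m : ℕ) : ZMod (2*m)) := by push_cast; ring
    _ = (((2*m)*t + m : ℕ) : ZMod (2*m)) := by rw [ht]; congr 1; ring
    _ = ((2*m : ℕ) : ZMod (2*m)) * t + m := by push_cast; ring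
    _ = m := by rw [ZMod.natCast_self]; ring

lemma a_pow (c : ZMod (2*m)) (k : ℕ) :
    (a c : QuaternionGroup m) ^ k = a ((k : ZMod (2*m)) * c) := by
  induction k with
  | zero => simp [one_def, -a_zero]
  | succ k ih => rw [pow_succ, ih, a_mul_a]; congr 1; push_cast; ring

/-- The automorphism of the quaternion group determined by a unit `u` and `j`. -/
def quatAut (u : (ZMod (2*m))ˣ) (j : ZMod (2*m)) : MulAut (QuaternionGroup m) where
  toFun := fun x => match x with
    | .a i => a ((u : ZMod (2*m)) * i)
    | .xa i => xa ((u : ZMod (2*m)) * i + j)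
  invFun := fun x => match x with
    | .a i => a ((u⁻¹ : (ZMod (2*m))ˣ) * i)
    | .xa i => xa ((u⁻¹ : (ZMod (2*m))ˣ) * (i - j))
  left_inv := by
    rintro (i | i) <;>
      simp [add_sub_cancel_right, ← mul_assoc, ← Units.val_mul]
  right_inv := by
    rintro (i | i) <;>
      simp [mul_sub, ← mul_assoc, ← Units.val_mul]
  map_mul' := by
    rintro (i | i) (k | k) <;> simp [mul_add, mul_sub]
    · ring_nf
    · ring_nf
    · rw [unit_mul_m]; ring

lemma quatAut_bijective (hm : m ≠ 0) (hm2 : m ≠ 2) :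
    Function.Bijective (fun p : (ZMod (2*m))ˣ × ZMod (2*m) => quatAut p.1 p.2) := by
  haveI : NeZero m := ⟨hm⟩
  constructor
  · rintro ⟨u, j⟩ ⟨u', j'⟩ h
    have h1 := congrArg (fun φ : MulAut (QuaternionGroup m) => φ (a 1)) h
    have h2 := congrArg (fun φ : MulAut (QuaternionGroup m) => φ (xa 0)) h
    simp only [quatAut, MulEquiv.coe_mk, Equiv.coe_fn_mk] at h1 h2
    injection h1 with h1
    injection h2 with h2
    simp only [mul_one, mul_zero, zero_add] at h1 h2
    exact Prod.ext (Units.ext h1) h2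
  · intro φ
    -- φ (a 1) must be some a i with i a unit
    have hord : orderOf (φ (a 1)) = 2 * m := by
      have h := orderOf_injective φ.toMonoidHom φ.injective (a 1 : QuaternionGroup m)
      rwa [orderOf_a_one] at h
    obtain ⟨i, hi⟩ : ∃ i, φ (a 1) = a i := by
      cases hφ : φ (a 1) with
      | a i => exact ⟨i, rfl⟩
      | xa i =>
        rw [hφ, orderOf_xa] at hord
        omega
    have hiu : IsUnit i := by
      rw [hi, orderOf_a] at hord
      have hg : Nat.gcd (2 * m) i.val = 1 := by
        have hd := Nat.gcd_dvd_left (2 * m) i.val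
        rcases Nat.eq_zero_or_pos (Nat.gcd (2 * m) i.val) with h0 | hpos
        · have := Nat.eq_zero_of_gcd_eq_zero_left h0
          omega
        · have := Nat.div_le_self (2 * m) (Nat.gcd (2 * m) i.val)
          rcases Nat.lt_or_ge 1 (Nat.gcd (2 * m) i.val) with h1 | h1
          · have := Nat.div_lt_self (by omega : 0 < 2 * m) h1
            omega
          · omega
      rw [← ZMod.natCast_zmod_val i, ZMod.isUnit_iff_coprime]
      exact Nat.coprime_comm.mp hg
    obtain ⟨u, hu⟩ := hiu
    -- φ (xa 0) must be some xa j
    obtain ⟨j, hj⟩ : ∃ j, φ (xa 0) = xa j := by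
      cases hφ : φ (xa 0) with
      | xa j => exact ⟨j, rfl⟩
      | a k =>
        exfalso
        -- order of a k is 4 and divides 2*m
        have ho4 : orderOf (a k : QuaternionGroup m) = 4 := by
          rw [← hφ]
          rw [show orderOf (φ (xa 0)) = orderOf (xa 0 : QuaternionGroup m) from
            orderOf_injective φ.toMonoidHom φ.injective _, orderOf_xa]
        have hdvd : (4 : ℕ) ∣ 2 * m := by
          rw [← ho4]
          apply orderOf_dvd_of_pow_eq_one
          rw [← ZMod.natCast_zmod_val k, ← a_one_pow, ← pow_mul, mul_comm k.val, pow_mul,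
            a_one_pow_n, one_pow]
        -- relation xa 0 * a 1 = a (-1) * xa 0 forces 2 * i = 0
        have hrel : (xa 0 : QuaternionGroup m) * a 1 = a (-1) * xa 0 := by simp
        have := congrArg φ hrel
        rw [map_mul, map_mul, hi, hφ, show (a (-1) : QuaternionGroup m) = (a 1)⁻¹ from rfl,
          map_inv, hi] at this
        simp only [a_mul_a] at this
        injection this with hii
        have h2i : (2 : ZMod (2*m)) * i = 0 := by
          have : i = -i := by linear_combination hii
          linear_combination this
        rw [← hu, show ((2 : ZMod (2*m)) * u = (u : (ZMod (2*m))ˣ) * 2) from by ring] at h2i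
        have h20 : (2 : ZMod (2*m)) = 0 := by
          have := congrArg (fun x => ((u⁻¹ : (ZMod (2*m))ˣ) : ZMod (2*m)) * x) h2i
          simpa [← mul_assoc, ← Units.val_mul] using this
        have hd2 : (2 * m : ℕ) ∣ 2 := by
          have : ((2 : ℕ) : ZMod (2*m)) = 0 := by exact_mod_cast h20
          exact (ZMod.natCast_eq_zero_iff 2 (2*m)).mp this
        have hm1 : m = 1 := by
          have := Nat.le_of_dvd (by norm_num) hd2
          omega
        rw [hm1] at hdvd
        rcases hdvd with ⟨d, hd⟩
        omega
    refine ⟨⟨u, j⟩, ?_⟩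
    apply MulEquiv.ext
    have hac : ∀ c : ZMod (2*m), φ (a c) = a ((u : ZMod (2*m)) * c) := by
      intro c
      have h1 : (a c : QuaternionGroup m) = a 1 ^ c.val := by
        rw [a_one_pow, ZMod.natCast_zmod_val]
      rw [h1, map_pow, hi, ← hu, a_pow, ZMod.natCast_zmod_val, mul_comm]
    rintro (c | c)
    · rw [hac c]
      simp only [quatAut, MulEquiv.coe_mk, Equiv.coe_fn_mk]
    · have hxc : φ (xa c) = xa (j + (u : ZMod (2*m)) * c) := by
        have h1 : (xa c : QuaternionGroup m) = xa 0 * a c := by simp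
        rw [h1, map_mul, hj, hac c, xa_mul_a]
      rw [hxc]
      simp only [quatAut, MulEquiv.coe_mk, Equiv.coe_fn_mk]
      rw [add_comm]

lemma card_mulAut_quat (hm : m ≠ 0) (hm2 : m ≠ 2) :
    Nat.card (MulAut (QuaternionGroup m)) = 2 * m * Nat.totient (2 * m) := by
  haveI : NeZero m := ⟨hm⟩
  haveI : NeZero (2*m) := ⟨by omega⟩
  have := Nat.card_eq_of_bijective _ (quatAut_bijective hm hm2)
  rw [← this, Nat.card_prod, Nat.card_eq_fintype_card, Nat.card_eq_fintype_card,
    ZMod.card_units_eq_totient, ZMod.card, mul_comm]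

/-- Proposition 3.3 (quaternion case): for `n ≥ 2`, `n ≠ 3`, the generalised
quaternion group of order `2 ^ n` has exactly `2 ^ (2n - 3)` automorphisms. -/
theorem card_mulAut_quaternionGroup (n : ℕ) (hn : 2 ≤ n) (hn3 : n ≠ 3) :
    Nat.card (MulAut (QuaternionGroup (2 ^ (n - 2)))) = 2 ^ (2 * n - 3) := by
  have hm0 : (2:ℕ)^(n-2) ≠ 0 := by positivity
  have hm2 : (2:ℕ)^(n-2) ≠ 2 := by
    intro h
    have : n - 2 = 1 := Nat.pow_right_injective (le_refl 2) (by simpa using h)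
    omega
  rw [card_mulAut_quat hm0 hm2]
  have h2m : 2 * 2^(n-2) = 2^(n-1) := by
    rw [← pow_succ']
    congr 1
    omega
  rw [h2m, Nat.totient_prime_pow Nat.prime_two (by omega : 0 < n-1)]
  norm_num
  rw [← pow_add]
  congr 1
  omega
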